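/- Let A = [[1,1],[0,1]] and B = [[1,0],[1,1]] in SL(2, ℤ). If M = M₁·M₂·⋯·M_n is a product with n ≥ 2, each M_i ∈ {A, B}, and at least one factor equal to A and at least one factor equal to B, then all four entries of M are positive integers and the trace of M is at least 3; in particular |tr M| > 2, so M represents a hyperbolic element of PSL(2, ℤ). -/

import Mathlib

open Matrix

/-- `A = [[1,1],[0,1]]`, representing `α : z ↦ z + 1`. -/
def matA : Matrix (Fin 2) (Fin 2) ℤ := !![1, 1; 0, 1]

/-- `B = [[1,0],[1,1]]`, representing `β : z ↦ z/(z + 1)`. -/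
def matB : Matrix (Fin 2) (Fin 2) ℤ := !![1, 0; 1, 1]

lemma mulA_entries (N : Matrix (Fin 2) (Fin 2) ℤ) :
    (matA * N) 0 0 = N 0 0 + N 1 0 ∧ (matA * N) 0 1 = N 0 1 + N 1 1 ∧
    (matA * N) 1 0 = N 1 0 ∧ (matA * N) 1 1 = N 1 1 := by
  refine ⟨?_, ?_, ?_, ?_⟩ <;> simp [matA, Matrix.mul_apply, Fin.sum_univ_two]

lemma mulB_entries (N : Matrix (Fin 2) (Fin 2) ℤ) :
    (matB * N) 0 0 = N 0 0 ∧ (matB * N) 0 1 = N 0 1 ∧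
    (matB * N) 1 0 = N 0 0 + N 1 0 ∧ (matB * N) 1 1 = N 0 1 + N 1 1 := by
  refine ⟨?_, ?_, ?_, ?_⟩ <;> simp [matB, Matrix.mul_apply, Fin.sum_univ_two]

lemma matA_ne_matB : matA ≠ matB := by
  intro h
  have := congrFun (congrFun h 1) 0
  simp [matA, matB] at this

lemma sturmian_aux (L : List (Matrix (Fin 2) (Fin 2) ℤ))
    (hmem : ∀ M ∈ L, M = matA ∨ M = matB) :
    0 ≤ L.prod 0 1 ∧ 0 ≤ L.prod 1 0 ∧ 1 ≤ L.prod 0 0 ∧ 1 ≤ L.prod 1 1 ∧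
      (matA ∈ L → 1 ≤ L.prod 0 1) ∧ (matB ∈ L → 1 ≤ L.prod 1 0) := by
  induction L with
  | nil => simp [Matrix.one_apply]
  | cons M T ih =>
    obtain ⟨h1, h2, h3, h4, h5, h6⟩ := ih (fun N hN => hmem N (List.mem_cons_of_mem _ hN))
    have hprod : (M :: T).prod = M * T.prod := List.prod_cons
    rcases hmem M List.mem_cons_self with hM | hM <;> subst hM
    · obtain ⟨e1, e2, e3, e4⟩ := mulA_entries T.prod
      rw [hprod, e1, e2, e3, e4]
      refine ⟨by linarith, by linarith, by linarith, by linarith, fun _ => by linarith, ?_⟩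
      intro h
      rcases List.mem_cons.mp h with h | h
      · exact absurd h.symm matA_ne_matB
      · have := h6 h; linarith
    · obtain ⟨e1, e2, e3, e4⟩ := mulB_entries T.prod
      rw [hprod, e1, e2, e3, e4]
      refine ⟨by linarith, by linarith, by linarith, by linarith, ?_, fun _ => by linarith⟩
      intro h
      rcases List.mem_cons.mp h with h | h
      · exact absurd h matA_ne_matB
      · have := h5 h; linarith

theorem sturmian_product_hyperbolic (L : List (Matrix (Fin 2) (Fin 2) ℤ))
    (hlen : 2 ≤ L.length) (hmem : ∀ M ∈ L, M = matA ∨ M = matB)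
    (hA : matA ∈ L) (hB : matB ∈ L) :
    (∀ i j : Fin 2, 0 < L.prod i j) ∧ 3 ≤ Matrix.trace L.prod ∧
      2 < |Matrix.trace L.prod| := by
  obtain ⟨M, T, rfl⟩ : ∃ M T, L = M :: T := by
    cases L with
    | nil => simp at hlen
    | cons a t => exact ⟨a, t, rfl⟩
  obtain ⟨h1, h2, h3, h4, h5, h6⟩ :=
    sturmian_aux T (fun N hN => hmem N (List.mem_cons_of_mem _ hN))
  have hprod : (M :: T).prod = M * T.prod := List.prod_cons
  have key : (∀ i j : Fin 2, 0 < (M :: T).prod i j) ∧ 3 ≤ (M :: T).prod 0 0 + (M :: T).prod 1 1 := by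
    rcases hmem M List.mem_cons_self with hM | hM <;> subst hM
    · have hBT : matB ∈ T := by
        rcases List.mem_cons.mp hB with h | h
        · exact absurd h.symm matA_ne_matB
        · exact h
      have h6' := h6 hBT
      obtain ⟨e1, e2, e3, e4⟩ := mulA_entries T.prod
      constructor
      · intro i j
        fin_cases i <;> fin_cases j <;>
          simp only [hprod, Fin.zero_eta, Fin.mk_one, e1, e2, e3, e4] <;> linarith
      · rw [hprod, e1, e4]; linarith
    · have hAT : matA ∈ T := by
        rcases List.mem_cons.mp hA with h | h
        · exact absurd h matA_ne_matB
        · exact h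
      have h5' := h5 hAT
      obtain ⟨e1, e2, e3, e4⟩ := mulB_entries T.prod
      constructor
      · intro i j
        fin_cases i <;> fin_cases j <;>
          simp only [hprod, Fin.zero_eta, Fin.mk_one, e1, e2, e3, e4] <;> linarith
      · rw [hprod, e1, e4]; linarith
  obtain ⟨hpos, htr⟩ := key
  have trf : Matrix.trace (M :: T).prod = (M :: T).prod 0 0 + (M :: T).prod 1 1 :=
    Matrix.trace_fin_two _
  refine ⟨hpos, by rw [trf]; exact htr, ?_⟩
  rw [trf, abs_of_pos (by linarith)]
  linarith
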